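/- Let Γ be a countable discrete group and let φ_n : Γ → ℂ be a sequence of positive definite functions such that |1 − φ_n(γ)| → 0 as n → ∞ for every γ ∈ Γ. Assume moreover that for every sequence (m_k) of natural numbers there exists a sequence (n_k) of natural numbers with n_k ≥ m_k for all k, such that for every infinite subset X ⊆ Γ the quantity sup_{x∈X} |1 − φ_{n_k}(x)| does not tend to 0 as k → ∞ (i.e., the functions φ_{n_k} do not converge uniformly to 1 on any infinite subset of Γ). Then there exists a proper conditionally negative definite function ψ : Γ → ℝ; that is, Γ has the Haagerup property. -/

import Mathlib

open scoped ComplexOrder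

/-- A function `φ : G → ℂ` is positive definite if for all `g_1, …, g_m ∈ G` and
`c_1, …, c_m ∈ ℂ` the sum `Σ_{i,j} c_i conj(c_j) φ(g_j⁻¹ g_i)` is a nonnegative real number
(equivalently, it is `≥ 0` for the standard partial order on `ℂ`). -/
def IsPositiveDefinite {G : Type*} [Group G] (φ : G → ℂ) : Prop :=
  ∀ (m : ℕ) (g : Fin m → G) (c : Fin m → ℂ),
    0 ≤ ∑ i : Fin m, ∑ j : Fin m, c i * (starRingEnd ℂ) (c j) * φ ((g j)⁻¹ * g i)

/-- A function `ψ : G → ℝ` is conditionally negative definite if `ψ(e) = 0`,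
`ψ(g⁻¹) = ψ(g)`, and `Σ_{i,j} c_i c_j ψ(g_j⁻¹ g_i) ≤ 0` whenever `Σ_i c_i = 0`. -/
def IsCondNegDef {G : Type*} [Group G] (ψ : G → ℝ) : Prop :=
  ψ 1 = 0 ∧ (∀ g : G, ψ g⁻¹ = ψ g) ∧
    ∀ (m : ℕ) (g : Fin m → G) (c : Fin m → ℝ), (∑ i : Fin m, c i) = 0 →
      ∑ i : Fin m, ∑ j : Fin m, c i * c j * ψ ((g j)⁻¹ * g i) ≤ 0

/-- A real-valued function on `G` is proper if all of its sublevel sets are finite. -/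
def IsProper {G : Type*} (ψ : G → ℝ) : Prop :=
  ∀ K : ℝ, {g : G | ψ g ≤ K}.Finite

section helpers
variable {G : Type*} [Group G] {φ : G → ℂ}

lemma pd_one (h : IsPositiveDefinite φ) : 0 ≤ (φ 1).re ∧ (φ 1).im = 0 := by
  have H := h 1 ![1] ![1]
  simp [Fin.sum_univ_one] at H
  rw [Complex.le_def] at H
  simp at H
  exact ⟨H.1, H.2.symm⟩

lemma pd_inv (h : IsPositiveDefinite φ) (g : G) : φ g⁻¹ = (starRingEnd ℂ) (φ g) := by
  have H1 := h 2 ![g, 1] ![1, 1]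
  have H2 := h 2 ![g, 1] ![1, Complex.I]
  simp [Fin.sum_univ_two] at H1 H2
  rw [Complex.le_def] at H1 H2
  simp [pd_one h |>.2, Complex.add_im, Complex.add_re] at H1 H2
  apply Complex.ext <;> simp [Complex.conj_re, Complex.conj_im] <;> linarith [H1.2, H2.2]

lemma pd_abs (h : IsPositiveDefinite φ) (g : G) : ‖φ g‖ ≤ (φ 1).re := by
  rcases eq_or_ne (φ g) 0 with h0 | h0
  · simp [h0]; exact (pd_one h).1
  · set a : ℝ := ‖φ g‖ with ha
    have habs : (0:ℝ) < a := norm_pos_iff.mpr h0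
    have H := h 2 ![g, 1] ![-(starRingEnd ℂ) (φ g), ((a:ℝ):ℂ)]
    simp [Fin.sum_univ_two] at H
    rw [pd_inv h g, Complex.le_def] at H
    have hzz : (starRingEnd ℂ) (φ g) * φ g = ((a^2 : ℝ) : ℂ) := by
      rw [mul_comm, Complex.mul_conj, Complex.normSq_eq_norm_sq]
    have H1 := H.1
    rw [show (starRingEnd ℂ) (φ g) * ↑a * φ g = ((a:ℂ))^2 * (a:ℂ) by
          rw [mul_right_comm, hzz]; push_cast; ring,
        show (↑a * φ g * (starRingEnd ℂ) (φ g)) = ((a:ℂ))^2 * (a:ℂ) by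
          rw [mul_assoc, Complex.mul_conj, Complex.normSq_eq_norm_sq]; push_cast; ring, hzz] at H1
    simp [← Complex.ofReal_pow, Complex.add_re, Complex.mul_re, Complex.ofReal_re,
      Complex.ofReal_im] at H1
    nlinarith [mul_pos habs habs, habs]

lemma pd_re (h : IsPositiveDefinite φ) (m : ℕ) (g : Fin m → G) (c : Fin m → ℝ) :
    0 ≤ ∑ i : Fin m, ∑ j : Fin m, c i * c j * (φ ((g j)⁻¹ * g i)).re := by
  have H := h m g (fun i => ((c i : ℝ) : ℂ))
  rw [Complex.le_def] at H
  have H1 := H.1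
  simp only [Complex.zero_re, Complex.re_sum, Complex.conj_ofReal, ← Complex.ofReal_mul,
    Complex.re_ofReal_mul] at H1
  simpa [mul_assoc] using H1

end helpers

lemma sum_expand {M : ℕ} (c : Fin M → ℝ) (A t : ℝ) (B : Fin M → Fin M → ℝ) :
    ∑ i : Fin M, ∑ j : Fin M, c i * c j * (t * (A - B i j))
      = t * ((∑ i : Fin M, c i) * (∑ i : Fin M, c i) * A
          - ∑ i : Fin M, ∑ j : Fin M, c i * c j * B i j) := by
  rw [Finset.sum_mul_sum, Finset.sum_mul, ← Finset.sum_sub_distrib, Finset.mul_sum]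
  refine Finset.sum_congr rfl fun i _ => ?_
  rw [Finset.sum_mul, ← Finset.sum_sub_distrib, Finset.mul_sum]
  refine Finset.sum_congr rfl fun j _ => ?_
  ring

set_option maxHeartbeats 2000000 in
/-- If `Γ` is a countable discrete group and `φ_n : Γ → ℂ` is a sequence of
positive definite functions with `|1 - φ_n(γ)| → 0` for every `γ`, such that for every sequence
`(m_k)` there is a sequence `(n_k)` with `n_k ≥ m_k` for which the functions `φ_{n_k}` do not
converge uniformly to `1` on any infinite subset of `Γ`, then `Γ` admits a proper conditionally
negative definite function, i.e. `Γ` has the Haagerup property. -/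
theorem haagerup_of_not_uniform
    (Γ : Type*) [Group Γ] [Countable Γ]
    (φ : ℕ → Γ → ℂ)
    (hpd : ∀ n, IsPositiveDefinite (φ n))
    (hconv : ∀ γ : Γ, Filter.Tendsto (fun n => ‖1 - φ n γ‖) Filter.atTop (nhds 0))
    (hnonunif : ∀ m : ℕ → ℕ, ∃ n : ℕ → ℕ, (∀ k, m k ≤ n k) ∧
      ∀ X : Set Γ, X.Infinite →
        ¬ TendstoUniformlyOn (fun k x => φ (n k) x) (fun _ => (1 : ℂ)) Filter.atTop X) :
    ∃ ψ : Γ → ℝ, IsCondNegDef ψ ∧ IsProper ψ := by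
  classical
  obtain ⟨f, hf⟩ := Countable.exists_injective_nat Γ
  set S : ℕ → Set Γ := fun k => {γ | f γ ≤ k} ∪ {1} with hS
  have hSfin : ∀ k, (S k).Finite := by
    intro k
    exact ((Set.finite_Iic k).preimage (Set.injOn_of_injective hf)).union (Set.finite_singleton 1)
  have hm : ∀ k : ℕ, ∃ N, k ≤ N ∧ ∀ n ≥ N, ∀ γ ∈ S k,
      ‖1 - φ n γ‖ ≤ (8:ℝ)⁻¹ ^ k := by
    intro k
    have hev : ∀ᶠ n in Filter.atTop, ∀ γ ∈ S k, ‖1 - φ n γ‖ ≤ (8:ℝ)⁻¹ ^ k := by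
      rw [Filter.eventually_all_finite (hSfin k)]
      intro γ _
      exact (hconv γ).eventually_le_const (show (0:ℝ) < (8:ℝ)⁻¹ ^ k by positivity)
    obtain ⟨N, hN⟩ := Filter.eventually_atTop.mp hev
    exact ⟨max N k, le_max_right _ _, fun n hn => hN n (le_trans (le_max_left _ _) hn)⟩
  choose m hm1 hm2 using hm
  obtain ⟨n, hn1, hn2⟩ := hnonunif m
  have hnk : ∀ k, k ≤ n k := fun k => le_trans (hm1 k) (hn1 k)
  have hsmall : ∀ k, ∀ γ ∈ S k, ‖1 - φ (n k) γ‖ ≤ (8:ℝ)⁻¹ ^ k :=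
    fun k => hm2 k (n k) (hn1 k)
  obtain ⟨D, hD⟩ : ∃ D : Γ → ℕ → ℝ, ∀ γ k, D γ k = 2 ^ k * ((φ (n k) 1).re - (φ (n k) γ).re) :=
    ⟨_, fun _ _ => rfl⟩
  have dnn : ∀ γ k, 0 ≤ D γ k := by
    intro γ k
    have h1 : (φ (n k) γ).re ≤ (φ (n k) 1).re :=
      le_trans (Complex.re_le_norm _) (pd_abs (hpd (n k)) γ)
    have h2 : (0:ℝ) ≤ 2 ^ k := by positivity
    rw [hD]
    exact mul_nonneg h2 (by linarith)
  have dbound : ∀ γ k, f γ ≤ k → D γ k ≤ 2 * (4:ℝ)⁻¹ ^ k := by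
    intro γ k hγ
    have h1 : ‖1 - φ (n k) 1‖ ≤ (8:ℝ)⁻¹ ^ k :=
      hsmall k 1 (Or.inr rfl)
    have h2 : ‖1 - φ (n k) γ‖ ≤ (8:ℝ)⁻¹ ^ k :=
      hsmall k γ (Or.inl hγ)
    have h3 : (φ (n k) 1).re - (φ (n k) γ).re ≤ 2 * (8:ℝ)⁻¹ ^ k := by
      have e1 : (φ (n k) 1).re - (φ (n k) γ).re = (φ (n k) 1 - φ (n k) γ).re := by
        simp [Complex.sub_re]
      have e2 : φ (n k) 1 - φ (n k) γ = -(1 - φ (n k) 1) + (1 - φ (n k) γ) := by ring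
      have h5 : ‖φ (n k) 1 - φ (n k) γ‖
          ≤ ‖1 - φ (n k) 1‖ + ‖1 - φ (n k) γ‖ := by
        rw [e2]
        refine le_trans (norm_add_le _ _) ?_
        rw [norm_neg]
      have h6 := le_trans (Complex.re_le_norm _) h5
      rw [← e1] at h6
      linarith
    have h4 : (0:ℝ) ≤ 2 ^ k := by positivity
    rw [hD]
    calc 2 ^ k * ((φ (n k) 1).re - (φ (n k) γ).re) ≤ 2 ^ k * (2 * (8:ℝ)⁻¹ ^ k) :=
      mul_le_mul_of_nonneg_left h3 h4
    _ = 2 * (2 * 8⁻¹ : ℝ) ^ k := by rw [mul_pow]; ring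
    _ = 2 * (4:ℝ)⁻¹ ^ k := by norm_num
  have dsum : ∀ γ, Summable (D γ) := by
    intro γ
    rw [← summable_nat_add_iff (f γ)]
    refine Summable.of_nonneg_of_le (fun k => dnn γ _) (fun k => dbound γ _ (Nat.le_add_left _ _)) ?_
    exact (summable_nat_add_iff (f γ)).2
      (((summable_geometric_of_lt_one (by norm_num) (by norm_num)).mul_left 2))
  obtain ⟨ψ, hψ⟩ : ∃ ψ : Γ → ℝ, ∀ γ, ψ γ = ∑' k, D γ k := ⟨_, fun _ => rfl⟩
  refine ⟨ψ, ⟨?_, ?_, ?_⟩, ?_⟩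
  · rw [hψ]
    have : ∀ k, D (1:Γ) k = 0 := fun k => by rw [hD]; simp
    simp [this]
  · intro g
    have h7 : ∀ k, D g⁻¹ k = D g k := by
      intro k
      rw [hD, hD, pd_inv (hpd (n k)) g, Complex.conj_re]
    rw [hψ, hψ]
    simp [h7]
  · intro M g c hc
    have hsummand : ∀ i j : Fin M, Summable (fun k => c i * c j * D ((g j)⁻¹ * g i) k) :=
      fun i j => (dsum _).mul_left _
    have step1 : ∑ i : Fin M, ∑ j : Fin M, c i * c j * ψ ((g j)⁻¹ * g i)
        = ∑' k, ∑ i : Fin M, ∑ j : Fin M, c i * c j * D ((g j)⁻¹ * g i) k := by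
      rw [Summable.tsum_finsetSum (f := fun (i : Fin M) (k : ℕ) => ∑ j : Fin M, c i * c j * D ((g j)⁻¹ * g i) k)
        (fun i _ => summable_sum (fun j _ => hsummand i j))]
      refine Finset.sum_congr rfl fun i _ => ?_
      rw [Summable.tsum_finsetSum (f := fun (j : Fin M) (k : ℕ) => c i * c j * D ((g j)⁻¹ * g i) k)
        (fun j _ => hsummand i j)]
      refine Finset.sum_congr rfl fun j _ => ?_
      rw [hψ, tsum_mul_left]
    rw [step1]
    refine tsum_nonpos fun k => ?_
    simp only [hD]
    have expand := sum_expand c ((φ (n k) 1).re) (2 ^ k)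
      (fun i j => (φ (n k) ((g j)⁻¹ * g i)).re)
    rw [expand, hc]
    have hQ := pd_re (hpd (n k)) M g c
    have h2k : (0:ℝ) ≤ (2:ℝ) ^ k := by positivity
    simp only [zero_mul, zero_sub, mul_neg]
    exact neg_nonpos.mpr (mul_nonneg h2k hQ)
  · -- properness
    intro K
    by_contra hfin
    have hX : Set.Infinite {g : Γ | ψ g ≤ K} := hfin
    refine hn2 _ hX ?_
    set X := {g : Γ | ψ g ≤ K} with hXdef
    have hKnn : 0 ≤ K := by
      obtain ⟨x, hx⟩ := hX.nonempty
      refine le_trans ?_ hx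
      rw [hψ]
      exact tsum_nonneg (dnn x)
    -- uniform bound
    set b : ℕ → ℝ := fun k => ‖1 - φ (n k) 1‖ + K * (2:ℝ)⁻¹ ^ k
      + Real.sqrt (2 * (φ (n k) 1).re * (K * (2:ℝ)⁻¹ ^ k)) with hb
    have hpoint : ∀ k, ∀ x ∈ X, dist (1:ℂ) (φ (n k) x) ≤ b k := by
      intro k x hx
      have hx' : ψ x ≤ K := hx
      have h2k : (0:ℝ) < 2 ^ k := by positivity
      set A := (φ (n k) 1).re with hA
      set r := (φ (n k) x).re with hr
      set ii := (φ (n k) x).im with hii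
      set εk := K * (2:ℝ)⁻¹ ^ k with hεk
      have hεk0 : 0 ≤ εk := by positivity
      have hDle : D x k ≤ ψ x := by
        rw [hψ]
        exact Summable.le_tsum (dsum x) k (fun j _ => dnn x j)
      have hAr : A - r ≤ εk := by
        rw [hD] at hDle
        rw [hεk, inv_pow, ← div_eq_mul_inv, le_div_iff₀ h2k]
        nlinarith [le_trans hDle hx']
      have hA0 : 0 ≤ A := (pd_one (hpd (n k))).1
      have hAim : (φ (n k) 1).im = 0 := (pd_one (hpd (n k))).2
      have habsx : ‖φ (n k) x‖ ≤ A := pd_abs (hpd (n k)) x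
      have habs_re : |r| ≤ A := le_trans (Complex.abs_re_le_norm _) habsx
      have hr1 : -A ≤ r := neg_le_of_abs_le habs_re
      have hr2 : r ≤ A := le_of_abs_le habs_re
      have hsq : r ^ 2 + ii ^ 2 = (‖φ (n k) x‖) ^ 2 := by
        rw [Complex.sq_norm, Complex.normSq_apply]; ring
      have him : ii ^ 2 ≤ (A - r) * (A + r) := by
        nlinarith [hsq, habsx, norm_nonneg (φ (n k) x)]
      set s := Real.sqrt (2 * A * εk) with hs
      have hs0 : 0 ≤ s := Real.sqrt_nonneg _
      have hs2 : s ^ 2 = 2 * A * εk := Real.sq_sqrt (by positivity)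
      have habs2 : (‖φ (n k) 1 - φ (n k) x‖) ^ 2 = (A - r) ^ 2 + ii ^ 2 := by
        rw [Complex.sq_norm, Complex.normSq_apply, Complex.sub_re, Complex.sub_im, hAim]
        ring
      have hle2 : (‖φ (n k) 1 - φ (n k) x‖) ^ 2 ≤ (εk + s) ^ 2 := by
        rw [habs2]
        nlinarith [him, hAr, hr1, hr2, hs2, mul_nonneg hεk0 hs0, hA0, hεk0]
      have habsle : ‖φ (n k) 1 - φ (n k) x‖ ≤ εk + s := by
        have h1 := Real.sqrt_le_sqrt hle2
        rwa [Real.sqrt_sq (norm_nonneg _), Real.sqrt_sq (by positivity)] at h1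
      have htri : ‖1 - φ (n k) x‖
          ≤ ‖1 - φ (n k) 1‖ + ‖φ (n k) 1 - φ (n k) x‖ := by
        have e : (1:ℂ) - φ (n k) x = (1 - φ (n k) 1) + (φ (n k) 1 - φ (n k) x) := by ring
        rw [e]
        exact norm_add_le _ _
      rw [Complex.dist_eq, hb]
      show ‖1 - φ (n k) x‖
        ≤ ‖1 - φ (n k) 1‖ + εk + s
      linarith [htri, habsle]
    have hb0 : Filter.Tendsto b Filter.atTop (nhds 0) := by
      have hnat : Filter.Tendsto n Filter.atTop Filter.atTop :=
        Filter.tendsto_atTop_mono hnk Filter.tendsto_id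
      have t1 : Filter.Tendsto (fun k => ‖1 - φ (n k) 1‖)
          Filter.atTop (nhds 0) := (hconv 1).comp hnat
      have t2 : Filter.Tendsto (fun k => K * (2:ℝ)⁻¹ ^ k) Filter.atTop (nhds 0) := by
        have := (tendsto_pow_atTop_nhds_zero_of_lt_one (by norm_num : (0:ℝ) ≤ 2⁻¹)
          (by norm_num : (2:ℝ)⁻¹ < 1)).const_mul K
        simpa using this
      have t3 : Filter.Tendsto (fun k => (φ (n k) 1).re) Filter.atTop (nhds 1) := by
        have hz : Filter.Tendsto (fun k => φ (n k) 1) Filter.atTop (nhds 1) := by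
          rw [tendsto_iff_norm_sub_tendsto_zero]
          simpa [norm_sub_rev] using t1
        have := (Complex.continuous_re.tendsto 1).comp hz
        simpa [Function.comp_def] using this
      have t4 : Filter.Tendsto (fun k => Real.sqrt (2 * (φ (n k) 1).re * (K * (2:ℝ)⁻¹ ^ k)))
          Filter.atTop (nhds 0) := by
        have harg : Filter.Tendsto (fun k => 2 * (φ (n k) 1).re * (K * (2:ℝ)⁻¹ ^ k))
            Filter.atTop (nhds 0) := by
          have := ((t3.const_mul 2).mul t2)
          simpa using this
        have := (Real.continuous_sqrt.tendsto 0).comp harg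
        simpa [Real.sqrt_zero, Function.comp_def] using this
      have := (t1.add t2).add t4
      simpa [hb] using this
    rw [Metric.tendstoUniformlyOn_iff]
    intro ε hε
    have := hb0.eventually_lt_const hε
    exact this.mono fun k hk x hx => lt_of_le_of_lt (hpoint k x hx) hk
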